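/- arXiv:2212.08162 — 5 statements merged into one kernel-verified Lean document; each statement's English description precedes it below -/
import Mathlib

section
/- For every 0 < r < 1 and all a, t ≥ 0, one has (a+t)^r − a^r = (1/(−Γ(−r))) · ∫₀^∞ (1 − e^{−t s}) e^{−a s} / s^{1+r} ds. -/
open MeasureTheory Real Set Filter

private lemma huber_one_sub_exp_nonneg {u : ℝ} (hu : 0 ≤ u) :
    0 ≤ 1 - Real.exp (-u) := by
  have : Real.exp (-u) ≤ Real.exp 0 := Real.exp_le_exp.mpr (by linarith)
  simp only [Real.exp_zero] at this
  linarith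

private lemma huber_one_sub_exp_le {u : ℝ} : 1 - Real.exp (-u) ≤ u := by
  have := Real.add_one_le_exp (-u); linarith

/-- Integrability of the Lévy measure integrand. -/
private lemma huber_integrable (r x : ℝ) (hr0 : 0 < r) (hr1 : r < 1) (hx : 0 ≤ x) :
    IntegrableOn (fun s => (1 - Real.exp (-x * s)) * s ^ (-(1 + r))) (Set.Ioi (0:ℝ)) := by
  have hmeas : AEStronglyMeasurable (fun s : ℝ => (1 - Real.exp (-x * s)) * s ^ (-(1 + r)))
      (volume.restrict (Set.Ioi (0:ℝ))) := by
    apply Measurable.aestronglyMeasurable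
    fun_prop
  rw [← Set.Ioc_union_Ioi_eq_Ioi (zero_le_one)]
  apply MeasureTheory.IntegrableOn.union
  · -- on Ioc 0 1, dominated by x * s ^ (-r)
    have hg : IntegrableOn (fun s : ℝ => x * s ^ (-r)) (Set.Ioc (0:ℝ) 1) := by
      have : IntervalIntegrable (fun s : ℝ => s ^ (-r)) volume 0 1 :=
        intervalIntegral.intervalIntegrable_rpow' (by linarith)
      exact ((intervalIntegrable_iff_integrableOn_Ioc_of_le zero_le_one).mp this).const_mul x
    refine Integrable.mono' hg (hmeas.mono_set Set.Ioc_subset_Ioi_self) ?_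
    filter_upwards [ae_restrict_mem measurableSet_Ioc] with s hs
    have hs0 : 0 < s := hs.1
    have hxs : 0 ≤ x * s := mul_nonneg hx hs0.le
    have hpow : 0 ≤ s ^ (-(1 + r)) := Real.rpow_nonneg hs0.le _
    have hnneg : 0 ≤ 1 - Real.exp (-x * s) := by
      rw [neg_mul]; exact huber_one_sub_exp_nonneg hxs
    rw [Real.norm_eq_abs, abs_of_nonneg (mul_nonneg hnneg hpow)]
    have h1 : (1 - Real.exp (-x * s)) * s ^ (-(1 + r)) ≤ (x * s) * s ^ (-(1 + r)) := by
      apply mul_le_mul_of_nonneg_right _ hpow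
      have := @huber_one_sub_exp_le (x * s)
      rw [neg_mul]; linarith
    have h2 : (x * s) * s ^ (-(1 + r)) = x * s ^ (-r) := by
      rw [mul_assoc]
      congr 1
      rw [show -r = 1 + -(1 + r) by ring, Real.rpow_add hs0, Real.rpow_one]
    linarith [h1, h2.ge, h2.le]
  · -- on Ioi 1, dominated by s ^ (-(1+r))
    have hg : IntegrableOn (fun s : ℝ => s ^ (-(1 + r))) (Set.Ioi (1:ℝ)) :=
      integrableOn_Ioi_rpow_of_lt (by linarith) one_pos
    refine Integrable.mono' hg (hmeas.mono_set (Set.Ioi_subset_Ioi zero_le_one)) ?_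
    filter_upwards [ae_restrict_mem measurableSet_Ioi] with s hs
    have hs0 : 0 < s := lt_trans one_pos hs
    have hxs : 0 ≤ x * s := mul_nonneg hx hs0.le
    have hpow : 0 ≤ s ^ (-(1 + r)) := Real.rpow_nonneg hs0.le _
    have hnneg : 0 ≤ 1 - Real.exp (-x * s) := by
      rw [neg_mul]; exact huber_one_sub_exp_nonneg hxs
    rw [Real.norm_eq_abs, abs_of_nonneg (mul_nonneg hnneg hpow)]
    have hle1 : 1 - Real.exp (-x * s) ≤ 1 := by linarith [Real.exp_pos (-x * s)]
    nlinarith [hnneg]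

/-- The value of the basic integral. -/
private lemma huber_C (r : ℝ) (hr0 : 0 < r) (hr1 : r < 1) :
    ∫ s in Set.Ioi (0:ℝ), (1 - Real.exp (-s)) * s ^ (-(1 + r))
      = Real.Gamma (1 - r) / r := by
  set G : ℝ → ℝ := fun s => (1 - Real.exp (-s)) * (-(s ^ (-r)) / r) with hGdef
  have hG0 : G 0 = 0 := by simp [hGdef]
  set f' : ℝ → ℝ := fun s =>
    (1 - Real.exp (-s)) * s ^ (-(1 + r)) - Real.exp (-s) * s ^ (-r) / r with hf'def
  have hderiv : ∀ s ∈ Set.Ioi (0:ℝ), HasDerivAt G (f' s) s := by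
    intro s hs
    have hs0 : 0 < s := hs
    have h1 : HasDerivAt (fun u : ℝ => 1 - Real.exp (-u)) (Real.exp (-s)) s := by
      have := ((Real.hasDerivAt_exp (-s)).comp s (hasDerivAt_neg s)).const_sub 1
      simpa using this
    have h2 : HasDerivAt (fun u : ℝ => -(u ^ (-r)) / r) (s ^ (-(1 + r))) s := by
      have h := ((Real.hasDerivAt_rpow_const (p := -r) (Or.inl hs0.ne')).neg).div_const r
      have : -(-r * s ^ (-r - 1)) / r = s ^ (-(1 + r)) := by
        rw [show -(1 + r) = -r - 1 by ring]
        field_simp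
      rwa [this] at h
    have := h1.mul h2
    convert (show HasDerivAt G _ s from this) using 1
    show (1 - Real.exp (-s)) * s ^ (-(1 + r)) - Real.exp (-s) * s ^ (-r) / r = _
    ring
  have hint : IntegrableOn f' (Set.Ioi (0:ℝ)) := by
    have ha : IntegrableOn (fun s => (1 - Real.exp (-s)) * s ^ (-(1 + r))) (Set.Ioi (0:ℝ)) := by
      have := huber_integrable r 1 hr0 hr1 zero_le_one
      simpa using this
    have hb : IntegrableOn (fun s => Real.exp (-s) * s ^ (-r) / r) (Set.Ioi (0:ℝ)) := by
      have := (Real.GammaIntegral_convergent (s := 1 - r) (by linarith)).div_const r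
      simpa [IntegrableOn, show (1:ℝ) - r - 1 = -r by ring] using this
    exact ha.sub hb
  have htop : Tendsto G atTop (nhds 0) := by
    have t1 : Tendsto (fun s : ℝ => 1 - Real.exp (-s)) atTop (nhds 1) := by
      have : Tendsto (fun s : ℝ => Real.exp (-s)) atTop (nhds 0) := by
        simpa using Real.tendsto_exp_neg_atTop_nhds_zero
      simpa using (tendsto_const_nhds.sub this)
    have t2 : Tendsto (fun s : ℝ => -(s ^ (-r)) / r) atTop (nhds 0) := by
      have := (tendsto_rpow_neg_atTop hr0).neg.div_const r
      simpa using this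
    have := t1.mul t2
    simpa using this
  have hcont : ContinuousWithinAt G (Set.Ici 0) 0 := by
    have hbound : ∀ᶠ s in nhdsWithin 0 (Set.Ici (0:ℝ)), ‖G s‖ ≤ s ^ (1 - r) / r := by
      filter_upwards [self_mem_nhdsWithin] with s (hs : (0:ℝ) ≤ s)
      rcases eq_or_lt_of_le hs with h | h
      · simp [hGdef, ← h, Real.zero_rpow (by linarith : (1:ℝ) - r ≠ 0)]
      · have hpow : 0 ≤ s ^ (-r) := Real.rpow_nonneg h.le _
        have hnn : 0 ≤ (1 - Real.exp (-s)) * s ^ (-r) / r :=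
          div_nonneg (mul_nonneg (huber_one_sub_exp_nonneg h.le) hpow) hr0.le
        have hGval : G s = -((1 - Real.exp (-s)) * s ^ (-r) / r) := by
          simp [hGdef]; ring
        rw [hGval, norm_neg, Real.norm_eq_abs, abs_of_nonneg hnn]
        have h1 : (1 - Real.exp (-s)) * s ^ (-r) ≤ s * s ^ (-r) :=
          mul_le_mul_of_nonneg_right huber_one_sub_exp_le hpow
        have h2 : s * s ^ (-r) = s ^ (1 - r) := by
          rw [show (1:ℝ) - r = 1 + -r by ring, Real.rpow_add h, Real.rpow_one]
        rw [div_le_div_iff_of_pos_right hr0] at *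
        linarith [h2 ▸ h1]
    have hlim : Tendsto (fun s : ℝ => s ^ (1 - r) / r) (nhdsWithin 0 (Set.Ici (0:ℝ)))
        (nhds 0) := by
      have hc : ContinuousAt (fun s : ℝ => s ^ (1 - r)) 0 :=
        Real.continuousAt_rpow_const 0 (1 - r) (Or.inr (by linarith))
      have := (hc.tendsto.div_const r).mono_left (nhdsWithin_le_nhds (s := Set.Ici (0:ℝ)))
      simpa [Real.zero_rpow (by linarith : (1:ℝ) - r ≠ 0)] using this
    have := squeeze_zero_norm' hbound hlim
    simpa [ContinuousWithinAt, hG0] using this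
  have key := MeasureTheory.integral_Ioi_of_hasDerivAt_of_tendsto hcont hderiv hint htop
  rw [hG0, sub_zero] at key
  have ha : IntegrableOn (fun s => (1 - Real.exp (-s)) * s ^ (-(1 + r))) (Set.Ioi (0:ℝ)) := by
    simpa using huber_integrable r 1 hr0 hr1 zero_le_one
  have hb : IntegrableOn (fun s => Real.exp (-s) * s ^ (-r) / r) (Set.Ioi (0:ℝ)) := by
    have := (Real.GammaIntegral_convergent (s := 1 - r) (by linarith)).div_const r
    simpa [IntegrableOn, show (1:ℝ) - r - 1 = -r by ring] using this
  have hsplit : ∫ s in Set.Ioi (0:ℝ), f' s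
      = (∫ s in Set.Ioi (0:ℝ), (1 - Real.exp (-s)) * s ^ (-(1 + r)))
        - ∫ s in Set.Ioi (0:ℝ), Real.exp (-s) * s ^ (-r) / r :=
    MeasureTheory.integral_sub ha hb
  have hgamma : ∫ s in Set.Ioi (0:ℝ), Real.exp (-s) * s ^ (-r) / r
      = Real.Gamma (1 - r) / r := by
    rw [MeasureTheory.integral_div]
    congr 1
    rw [Real.Gamma_eq_integral (by linarith : (0:ℝ) < 1 - r)]
    congr 1 with s
    rw [show (1:ℝ) - r - 1 = -r by ring]
  rw [key, hgamma] at hsplit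
  linarith

/-- Scaling identity. -/
private lemma huber_scale (r x : ℝ) (hr0 : 0 < r) (hr1 : r < 1) (hx : 0 ≤ x) :
    ∫ s in Set.Ioi (0:ℝ), (1 - Real.exp (-x * s)) * s ^ (-(1 + r))
      = x ^ r * (Real.Gamma (1 - r) / r) := by
  rcases eq_or_lt_of_le hx with h | hx0
  · simp [← h, Real.zero_rpow hr0.ne']
  · rw [← huber_C r hr0 hr1]
    have base := MeasureTheory.integral_comp_mul_left_Ioi
      (fun u : ℝ => (1 - Real.exp (-u)) * u ^ (-(1 + r))) 0 hx0
    have hcong : Set.EqOn (fun s : ℝ => (1 - Real.exp (-(x * s))) * (x * s) ^ (-(1 + r)))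
        (fun s : ℝ => x ^ (-(1 + r)) * ((1 - Real.exp (-x * s)) * s ^ (-(1 + r))))
        (Set.Ioi (0:ℝ)) := by
      intro s hs
      have hs0 : (0:ℝ) < s := hs
      simp only
      rw [Real.mul_rpow hx0.le hs0.le, neg_mul]
      ring
    rw [MeasureTheory.setIntegral_congr_fun measurableSet_Ioi hcong,
      MeasureTheory.integral_const_mul, mul_zero, smul_eq_mul] at base
    have hxpow : x ^ (-(1 + r)) ≠ 0 := (Real.rpow_pos_of_pos hx0 _).ne'
    have hfin : x ^ r = x ^ (1 + r) * x⁻¹ := by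
      rw [← Real.rpow_neg_one x, ← Real.rpow_add hx0]
      norm_num
    have := congrArg (fun y => x ^ (1 + r) * y) base
    simp only [← mul_assoc] at this
    rw [← Real.rpow_add hx0] at this
    simp only [add_neg_cancel, Real.rpow_zero, one_mul] at this
    rw [this, hfin]

/-- Integral representation of the Huber-energy power function:
for 0 < r < 1 and a, t ≥ 0,
(a+t)^r − a^r = (1/(−Γ(−r))) ∫₀^∞ (1 − e^{−t s}) e^{−a s} / s^{1+r} ds. -/
theorem huber_power_integral_representation
    (r a t : ℝ) (hr0 : 0 < r) (hr1 : r < 1) (ha : 0 ≤ a) (ht : 0 ≤ t) :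
    (a + t) ^ r - a ^ r =
      (1 / (-Real.Gamma (-r))) *
        ∫ s in Set.Ioi (0 : ℝ), (1 - Real.exp (-t * s)) * Real.exp (-a * s) / s ^ (1 + r) := by
  have hgam : Real.Gamma (1 - r) = -r * Real.Gamma (-r) := by
    have := Real.Gamma_add_one (neg_ne_zero.mpr hr0.ne')
    rw [show (1:ℝ) - r = -r + 1 by ring]
    exact this
  have hC : Real.Gamma (1 - r) / r = -Real.Gamma (-r) := by
    rw [hgam]; field_simp
  have hCpos : 0 < -Real.Gamma (-r) := by
    rw [← hC]
    exact div_pos (Real.Gamma_pos_of_pos (by linarith)) hr0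
  have hcong : Set.EqOn
      (fun s : ℝ => (1 - Real.exp (-t * s)) * Real.exp (-a * s) / s ^ (1 + r))
      (fun s : ℝ => (1 - Real.exp (-(a + t) * s)) * s ^ (-(1 + r))
        - (1 - Real.exp (-a * s)) * s ^ (-(1 + r))) (Set.Ioi (0:ℝ)) := by
    intro s hs
    have hs0 : (0:ℝ) < s := hs
    simp only
    rw [div_eq_mul_inv, ← Real.rpow_neg hs0.le]
    rw [show -(a + t) * s = -a * s + -t * s by ring, Real.exp_add]
    ring
  rw [MeasureTheory.setIntegral_congr_fun measurableSet_Ioi hcong,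
    MeasureTheory.integral_sub (huber_integrable r (a + t) hr0 hr1 (by linarith))
      (huber_integrable r a hr0 hr1 ha),
    huber_scale r (a + t) hr0 hr1 (by linarith), huber_scale r a hr0 hr1 ha, hC]
  have hne : Real.Gamma (-r) ≠ 0 := (neg_pos.mp hCpos).ne
  field_simp
  ring
end

section
/- For every 0 < r < 1 and t ≥ 0, t^r = (1/(−Γ(−r))) · ∫₀^∞ (1 − e^{−t s}) / s^{1+r} ds. -/
open MeasureTheory Real Set Filter

private lemma schoenberg_integrable (r : ℝ) (hr0 : 0 < r) (hr1 : r < 1) :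
    IntegrableOn (fun u : ℝ => (1 - Real.exp (-u)) / u ^ (1 + r)) (Set.Ioi 0) := by
  have hmeas : AEStronglyMeasurable (fun u : ℝ => (1 - Real.exp (-u)) / u ^ (1 + r))
      (volume.restrict (Set.Ioi (0:ℝ))) := by
    apply Measurable.aestronglyMeasurable
    fun_prop
  have h1 : IntegrableOn (fun u : ℝ => (1 - Real.exp (-u)) / u ^ (1 + r)) (Set.Ioc 0 1) := by
    have hb : IntegrableOn (fun u : ℝ => u ^ (-r)) (Set.Ioc (0:ℝ) 1) := by
      have := intervalIntegral.intervalIntegrable_rpow' (a := 0) (b := 1)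
        (show (-1:ℝ) < -r by linarith)
      rwa [intervalIntegrable_iff_integrableOn_Ioc_of_le zero_le_one] at this
    refine Integrable.mono' hb (hmeas.mono_set Set.Ioc_subset_Ioi_self) ?_
    filter_upwards [ae_restrict_mem measurableSet_Ioc] with u hu
    obtain ⟨hu0, _⟩ := hu
    have hA0 : 0 ≤ 1 - Real.exp (-u) := by
      have : Real.exp (-u) ≤ 1 := Real.exp_le_one_iff.mpr (by linarith)
      linarith
    have hAu : 1 - Real.exp (-u) ≤ u := by
      have := Real.add_one_le_exp (-u); linarith
    have hpow : (0:ℝ) < u ^ (1 + r) := Real.rpow_pos_of_pos hu0 _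
    rw [Real.norm_eq_abs, abs_of_nonneg (div_nonneg hA0 hpow.le)]
    calc (1 - Real.exp (-u)) / u ^ (1 + r) ≤ u / u ^ (1 + r) := by gcongr
      _ = u ^ (-r) := by
          rw [show -r = 1 - (1+r) by ring, Real.rpow_sub hu0, Real.rpow_one]
  have h2 : IntegrableOn (fun u : ℝ => (1 - Real.exp (-u)) / u ^ (1 + r)) (Set.Ioi 1) := by
    have hb : IntegrableOn (fun u : ℝ => u ^ (-(1 + r))) (Set.Ioi (1:ℝ)) :=
      integrableOn_Ioi_rpow_of_lt (by linarith) one_pos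
    refine Integrable.mono' hb (hmeas.mono_set (Set.Ioi_subset_Ioi zero_le_one)) ?_
    filter_upwards [ae_restrict_mem measurableSet_Ioi] with u hu
    have hu0 : (0:ℝ) < u := lt_trans one_pos hu
    have hA0 : 0 ≤ 1 - Real.exp (-u) := by
      have : Real.exp (-u) ≤ 1 := Real.exp_le_one_iff.mpr (by linarith)
      linarith
    have hA1 : 1 - Real.exp (-u) ≤ 1 := by
      have := Real.exp_pos (-u); linarith
    have hpow : (0:ℝ) < u ^ (1 + r) := Real.rpow_pos_of_pos hu0 _
    rw [Real.norm_eq_abs, abs_of_nonneg (div_nonneg hA0 hpow.le)]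
    calc (1 - Real.exp (-u)) / u ^ (1 + r) ≤ 1 / u ^ (1 + r) := by gcongr
      _ = u ^ (-(1 + r)) := by rw [Real.rpow_neg hu0.le, one_div]
  have := h1.union h2
  rwa [Set.Ioc_union_Ioi_eq_Ioi zero_le_one] at this

private lemma schoenberg_exp_rpow_integrable (r : ℝ) (hr1 : r < 1) :
    IntegrableOn (fun u : ℝ => Real.exp (-u) * u ^ (-r)) (Set.Ioi 0) := by
  have := Real.GammaIntegral_convergent (show (0:ℝ) < 1 - r by linarith)
  have he : (1:ℝ) - r - 1 = -r := by ring
  rwa [he] at this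

private lemma schoenberg_integral_value (r : ℝ) (hr0 : 0 < r) (hr1 : r < 1) :
    ∫ u in Set.Ioi (0:ℝ), (1 - Real.exp (-u)) / u ^ (1 + r)
      = Real.Gamma (1 - r) / r := by
  set F : ℝ → ℝ := fun u => -((1 - Real.exp (-u)) * u ^ (-r)) / r with hF
  set f' : ℝ → ℝ := fun u =>
    (1 - Real.exp (-u)) / u ^ (1 + r) - Real.exp (-u) * u ^ (-r) / r with hf'
  have hderiv : ∀ u ∈ Set.Ioi (0:ℝ), HasDerivAt F (f' u) u := by
    intro u hu
    have hu0 : (0:ℝ) < u := hu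
    have h1 : HasDerivAt (fun u : ℝ => 1 - Real.exp (-u)) (Real.exp (-u)) u := by
      have := ((Real.hasDerivAt_exp (-u)).comp u (hasDerivAt_neg u)).const_sub 1
      simpa using this
    have h2 : HasDerivAt (fun u : ℝ => u ^ (-r)) (-r * u ^ (-r - 1)) u :=
      Real.hasDerivAt_rpow_const (Or.inl hu0.ne')
    have h3 := ((h1.mul h2).neg).div_const r
    convert h3 using 1
    · rfl
    · rfl
    · rfl
    have hinv : (u ^ (1 + r) : ℝ)⁻¹ = u ^ (-r - 1) := by
      rw [← Real.rpow_neg hu0.le]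
      congr 1; ring
    rw [hf']
    simp only
    rw [div_eq_mul_inv (1 - Real.exp (-u)), hinv]
    field_simp
    ring
  have hf'int : IntegrableOn f' (Set.Ioi (0:ℝ)) :=
    (schoenberg_integrable r hr0 hr1).sub
      ((schoenberg_exp_rpow_integrable r hr1).div_const r)
  have hF0 : F 0 = 0 := by
    simp [hF, Real.zero_rpow (by linarith : -r ≠ 0)]
  have hcont : ContinuousWithinAt F (Set.Ici 0) 0 := by
    rw [ContinuousWithinAt, hF0]
    have hlow : Tendsto (fun u : ℝ => -(u ^ (1 - r)) / r) (nhdsWithin 0 (Set.Ici 0)) (nhds 0) := by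
      have hc : ContinuousWithinAt (fun u : ℝ => u ^ (1 - r)) (Set.Ici 0) 0 :=
        ((Real.continuousAt_rpow_const 0 (1 - r) (Or.inr (by linarith))).continuousWithinAt)
      have := (hc.neg.div_const r)
      rw [ContinuousWithinAt] at this
      simpa [Real.zero_rpow (by linarith : (1:ℝ) - r ≠ 0)] using this
    refine tendsto_of_tendsto_of_tendsto_of_le_of_le' hlow tendsto_const_nhds ?_ ?_
    · filter_upwards [self_mem_nhdsWithin] with u hu
      have hkey : (1 - Real.exp (-u)) * u ^ (-r) ≤ u ^ (1 - r) := by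
        rcases eq_or_lt_of_le (Set.mem_Ici.mp hu : (0:ℝ) ≤ u) with h0 | hpos
        · simp [← h0, Real.zero_rpow (by linarith : -r ≠ 0),
            Real.zero_rpow (by linarith : (1:ℝ) - r ≠ 0)]
        · have hAu : 1 - Real.exp (-u) ≤ u := by
            have := Real.add_one_le_exp (-u); linarith
          calc (1 - Real.exp (-u)) * u ^ (-r) ≤ u * u ^ (-r) := by
                have := Real.rpow_nonneg hpos.le (-r)
                gcongr
            _ = u ^ (1 - r) := by
                rw [show (1:ℝ) - r = 1 + -r by ring, Real.rpow_add hpos, Real.rpow_one]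
      simp only [hF]
      gcongr
    · filter_upwards [self_mem_nhdsWithin] with u hu
      have hA0 : 0 ≤ 1 - Real.exp (-u) := by
        have : Real.exp (-u) ≤ 1 := Real.exp_le_one_iff.mpr (by linarith [hu.out])
        linarith
      have : 0 ≤ (1 - Real.exp (-u)) * u ^ (-r) :=
        mul_nonneg hA0 (Real.rpow_nonneg hu.out _)
      simp only [hF]
      exact div_nonpos_of_nonpos_of_nonneg (by linarith) hr0.le
  have htop : Tendsto F atTop (nhds 0) := by
    have h1 : Tendsto (fun u : ℝ => 1 - Real.exp (-u)) atTop (nhds 1) := by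
      simpa using (Real.tendsto_exp_neg_atTop_nhds_zero.const_sub 1)
    have h2 : Tendsto (fun u : ℝ => u ^ (-r)) atTop (nhds 0) := tendsto_rpow_neg_atTop hr0
    have := ((h1.mul h2).neg.div_const r)
    simpa using this
  have hFTC := integral_Ioi_of_hasDerivAt_of_tendsto hcont hderiv hf'int htop
  rw [hF0, sub_zero] at hFTC
  have hsplit : ∫ u in Set.Ioi (0:ℝ), (1 - Real.exp (-u)) / u ^ (1 + r)
      = (∫ u in Set.Ioi (0:ℝ), f' u)
        + ∫ u in Set.Ioi (0:ℝ), Real.exp (-u) * u ^ (-r) / r := by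
    rw [← integral_add hf'int ((schoenberg_exp_rpow_integrable r hr1).div_const r)]
    congr 1; funext u; simp [hf']
  have hgamma : ∫ u in Set.Ioi (0:ℝ), Real.exp (-u) * u ^ (-r) / r
      = Real.Gamma (1 - r) / r := by
    rw [integral_div, Real.Gamma_eq_integral (show (0:ℝ) < 1 - r by linarith)]
    norm_num
  rw [hsplit, hFTC, hgamma, zero_add]

/-- Schoenberg's integral representation:
for 0 < r < 1 and t ≥ 0, t^r = (1/(−Γ(−r))) ∫₀^∞ (1 − e^{−t s}) / s^{1+r} ds. -/
theorem schoenberg_power_integral_representation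
    (r t : ℝ) (hr0 : 0 < r) (hr1 : r < 1) (ht : 0 ≤ t) :
    t ^ r =
      (1 / (-Real.Gamma (-r))) *
        ∫ s in Set.Ioi (0 : ℝ), (1 - Real.exp (-t * s)) / s ^ (1 + r) := by
  have hG1 : 0 < Real.Gamma (1 - r) := Real.Gamma_pos_of_pos (by linarith)
  have hGadd : Real.Gamma (1 - r) = -r * Real.Gamma (-r) := by
    have := Real.Gamma_add_one (show -r ≠ 0 by linarith)
    rwa [show -r + 1 = 1 - r by ring] at this
  have hneg : -Real.Gamma (-r) = Real.Gamma (1 - r) / r := by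
    rw [hGadd]; field_simp
  rcases eq_or_lt_of_le ht with h0 | htpos
  · rw [← h0]
    simp [Real.zero_rpow hr0.ne']
  · have key := integral_comp_mul_left_Ioi
      (fun u => (1 - Real.exp (-u)) / u ^ (1 + r)) 0 htpos
    rw [mul_zero] at key
    have hcongr : ∫ s in Set.Ioi (0 : ℝ), (1 - Real.exp (-t * s)) / s ^ (1 + r)
        = ∫ s in Set.Ioi (0 : ℝ),
            t ^ (1 + r) * ((1 - Real.exp (-(t * s))) / (t * s) ^ (1 + r)) := by
      refine setIntegral_congr_fun measurableSet_Ioi fun s hs => ?_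
      have hs0 : (0:ℝ) < s := hs
      have hmul : (t * s) ^ (1 + r) = t ^ (1 + r) * s ^ (1 + r) :=
        Real.mul_rpow htpos.le hs0.le
      have htp : (0:ℝ) < t ^ (1 + r) := Real.rpow_pos_of_pos htpos _
      rw [hmul, neg_mul]
      field_simp
    rw [hcongr, integral_const_mul, key, smul_eq_mul,
      schoenberg_integral_value r hr0 hr1, hneg]
    have hsum : t ^ (1 + r) = t * t ^ r := by
      rw [Real.rpow_add htpos, Real.rpow_one]
    rw [hsum]
    field_simp
end

section
/- Let d be the distance on probability measures on ℝ induced by the energy kernel h(x,y) = |x−y|, i.e., d(ν,ξ)² = E|X−Y| − (1/2)E|X−X'| − (1/2)E|Y−Y'|. Let μ be an absolutely continuous probability measure on ℝ with strictly increasing CDF F and finite first moment, and fix J ≥ 1 with uniform weights 1/J. Then the unique minimizer X* ∈ ℝ^J of X ↦ d((1/J)Σ_j δ_{X_j}, μ)² (up to reordering of coordinates) satisfies F(X*_{(j)}) = (j − 1/2)/J for each j, where X*_{(1)} ≤ … ≤ X*_{(J)} are the ordered points. -/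
open MeasureTheory

section EnergyAux

lemma aux_if_int (y a b : ℝ) (hab : a ≤ b) :
    ∫ t in a..b, (if y ≤ t then (1:ℝ) else -1) = |b - y| - |a - y| := by
  have hfun : (fun t => (if y ≤ t then (1:ℝ) else -1))
      = fun t => 2 * (Set.Ici y).indicator (fun _ => (1:ℝ)) t - 1 := by
    funext t
    by_cases h : y ≤ t <;> simp [Set.indicator_apply, h] <;> ring
  have hind : IntervalIntegrable ((Set.Ici y).indicator (fun _ => (1:ℝ))) volume a b := by
    apply Monotone.intervalIntegrable
    intro s t hst
    by_cases hs : y ≤ s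
    · simp [Set.indicator_apply, hs, hs.trans hst]
    · by_cases ht : y ≤ t <;> simp [Set.indicator_apply, hs, ht]
  have hval : ∫ t in a..b, (Set.Ici y).indicator (fun _ => (1:ℝ)) t
      = (volume (Set.Ici y ∩ Set.Ioc a b)).toReal := by
    rw [intervalIntegral.integral_of_le hab,
      MeasureTheory.integral_indicator measurableSet_Ici,
      MeasureTheory.Measure.restrict_restrict measurableSet_Ici, setIntegral_const]
    simp
    rfl
  rw [hfun]
  rw [intervalIntegral.integral_sub (hind.const_mul 2) intervalIntegrable_const,
    intervalIntegral.integral_const_mul, hval, intervalIntegral.integral_const]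
  rcases le_or_gt y a with h1 | h1
  · have : Set.Ici y ∩ Set.Ioc a b = Set.Ioc a b := by
      apply Set.inter_eq_right.mpr
      intro t ht
      exact le_trans h1 (le_of_lt ht.1)
    rw [this, Real.volume_Ioc, ENNReal.toReal_ofReal (by linarith)]
    rw [abs_of_nonneg (by linarith), abs_of_nonneg (by linarith)]
    simp only [smul_eq_mul]; ring
  · rcases le_or_gt y b with h2 | h2
    · have : Set.Ici y ∩ Set.Ioc a b = Set.Icc y b := by
        ext t
        simp only [Set.mem_inter_iff, Set.mem_Ici, Set.mem_Ioc, Set.mem_Icc]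
        constructor
        · rintro ⟨h3, _, h5⟩; exact ⟨h3, h5⟩
        · rintro ⟨h3, h4⟩; exact ⟨h3, lt_of_lt_of_le h1 h3, h4⟩
      rw [this, Real.volume_Icc, ENNReal.toReal_ofReal (by linarith)]
      rw [abs_of_nonneg (by linarith), abs_of_nonpos (by linarith)]
      simp only [smul_eq_mul]; ring
    · have : Set.Ici y ∩ Set.Ioc a b = ∅ := by
        ext t
        simp only [Set.mem_inter_iff, Set.mem_Ici, Set.mem_Ioc, Set.mem_empty_iff_false,
          iff_false, not_and]
        intro h3 h4
        intro h5
        linarith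
      rw [this]
      rw [abs_of_nonpos (by linarith), abs_of_nonpos (by linarith)]
      simp only [measure_empty, ENNReal.toReal_zero, mul_zero, zero_sub, smul_eq_mul]
      ring

lemma aux_int_abs (μ : Measure ℝ) [IsProbabilityMeasure μ]
    (hmom : Integrable (fun x => |x|) μ) (x : ℝ) :
    Integrable (fun y => |x - y|) μ := by
  have h1 : Integrable (fun y : ℝ => |x| + |y|) μ := (integrable_const _).add hmom
  refine h1.mono' ?_ (Filter.Eventually.of_forall fun y => ?_)
  · exact ((continuous_const.sub continuous_id).abs).aestronglyMeasurable
  · rw [Real.norm_eq_abs, abs_abs]; exact (abs_sub x y).trans (by simp)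

lemma aux_g_diff (μ : Measure ℝ) [IsProbabilityMeasure μ]
    (hmom : Integrable (fun x => |x|) μ)
    (F : ℝ → ℝ) (hF : ∀ x, F x = (μ (Set.Iic x)).toReal) (a b : ℝ) (hab : a ≤ b) :
    (∫ y, |b - y| ∂μ) - (∫ y, |a - y| ∂μ) = ∫ t in a..b, (2 * F t - 1) := by
  have hint := aux_int_abs μ hmom
  haveI : IsFiniteMeasure (volume.restrict (Set.Ioc a b)) :=
    ⟨by rw [Measure.restrict_apply_univ, Real.volume_Ioc]; exact ENNReal.ofReal_lt_top⟩
  have hmeas : Measurable (fun p : ℝ × ℝ => if p.1 ≤ p.2 then (1:ℝ) else -1) :=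
    Measurable.ite (measurableSet_le measurable_fst measurable_snd) measurable_const
      measurable_const
  have hintg : Integrable (fun p : ℝ × ℝ => if p.1 ≤ p.2 then (1:ℝ) else -1)
      (μ.prod (volume.restrict (Set.Ioc a b))) := by
    refine (integrable_const (1:ℝ)).mono' hmeas.aestronglyMeasurable
      (Filter.Eventually.of_forall fun p => ?_)
    by_cases h : p.1 ≤ p.2 <;> simp [h]
  have key : (∫ y, (|b - y| - |a - y|) ∂μ)
      = ∫ t in Set.Ioc a b, (∫ y, (if y ≤ t then (1:ℝ) else -1) ∂μ) := by
    rw [← MeasureTheory.integral_integral_swap hintg]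
    congr 1
    funext y
    rw [← aux_if_int y a b hab, intervalIntegral.integral_of_le hab]
  have inner : ∀ t : ℝ, (∫ y, (if y ≤ t then (1:ℝ) else -1) ∂μ) = 2 * F t - 1 := by
    intro t
    have h1 : (fun y => if y ≤ t then (1:ℝ) else -1)
        = fun y => 2 * (Set.Iic t).indicator (fun _ => (1:ℝ)) y - 1 := by
      funext y
      by_cases h : y ≤ t <;> simp [Set.indicator_apply, h] <;> ring
    have h2 : Integrable ((Set.Iic t).indicator (fun _ => (1:ℝ))) μ := by
      refine (integrable_const (1:ℝ)).mono' ?_ (Filter.Eventually.of_forall fun y => ?_)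
      · exact ((measurable_const.indicator measurableSet_Iic).aestronglyMeasurable)
      · by_cases h : y ≤ t <;> simp [Set.indicator_apply, h]
    rw [h1, integral_sub ((h2.const_mul 2)) (integrable_const 1),
      MeasureTheory.integral_const_mul, MeasureTheory.integral_indicator measurableSet_Iic,
      setIntegral_const, integral_const]
    simp [hF t]
    rfl
  rw [← integral_sub (hint b) (hint a), key, intervalIntegral.integral_of_le hab]
  congr 1
  funext t
  exact inner t

lemma aux_lb (F : ℝ → ℝ) (hm : StrictMono F) {a b : ℝ} (hab : a < b) :
    (b - a) * F a < ∫ t in a..b, F t := by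
  set m := (a + b) / 2 with hmdef
  have ham : a < m := by rw [hmdef]; linarith
  have hmb : m < b := by rw [hmdef]; linarith
  have hi : ∀ u v : ℝ, IntervalIntegrable F volume u v := fun u v =>
    hm.monotone.intervalIntegrable
  have hsplit : (∫ t in a..m, F t) + (∫ t in m..b, F t) = ∫ t in a..b, F t :=
    intervalIntegral.integral_add_adjacent_intervals (hi a m) (hi m b)
  have h1 : (m - a) * F a ≤ ∫ t in a..m, F t := by
    have := intervalIntegral.integral_mono_on ham.le intervalIntegrable_const (hi a m)
      (fun t ht => hm.monotone ht.1)
    simpa [smul_eq_mul, mul_comm] using this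
  have h2 : (b - m) * F m ≤ ∫ t in m..b, F t := by
    have := intervalIntegral.integral_mono_on hmb.le intervalIntegrable_const (hi m b)
      (fun t ht => hm.monotone ht.1)
    simpa [smul_eq_mul, mul_comm] using this
  have h3 : (b - m) * F a < (b - m) * F m :=
    mul_lt_mul_of_pos_left (hm ham) (by linarith)
  nlinarith [hsplit]

lemma aux_ub (F : ℝ → ℝ) (hm : StrictMono F) {a b : ℝ} (hab : a < b) :
    (∫ t in a..b, F t) < (b - a) * F b := by
  set m := (a + b) / 2 with hmdef
  have ham : a < m := by rw [hmdef]; linarith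
  have hmb : m < b := by rw [hmdef]; linarith
  have hi : ∀ u v : ℝ, IntervalIntegrable F volume u v := fun u v =>
    hm.monotone.intervalIntegrable
  have hsplit : (∫ t in a..m, F t) + (∫ t in m..b, F t) = ∫ t in a..b, F t :=
    intervalIntegral.integral_add_adjacent_intervals (hi a m) (hi m b)
  have h1 : (∫ t in a..m, F t) ≤ (m - a) * F m := by
    have := intervalIntegral.integral_mono_on ham.le (hi a m) intervalIntegrable_const
      (fun t ht => hm.monotone ht.2)
    simpa [smul_eq_mul, mul_comm] using this
  have h2 : (∫ t in m..b, F t) ≤ (b - m) * F b := by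
    have := intervalIntegral.integral_mono_on hmb.le (hi m b) intervalIntegrable_const
      (fun t ht => hm.monotone ht.2)
    simpa [smul_eq_mul, mul_comm] using this
  have h3 : (m - a) * F m < (m - a) * F b :=
    mul_lt_mul_of_pos_left (hm hmb) (by linarith)
  nlinarith [hsplit]

lemma aux_strictmin (μ : Measure ℝ) [IsProbabilityMeasure μ]
    (hmom : Integrable (fun x => |x|) μ)
    (F : ℝ → ℝ) (hF : ∀ x, F x = (μ (Set.Iic x)).toReal) (hFmono : StrictMono F)
    (xs x : ℝ) (hne : x ≠ xs) :
    (∫ y, |xs - y| ∂μ) - (2 * F xs - 1) * xs < (∫ y, |x - y| ∂μ) - (2 * F xs - 1) * x := by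
  have hii : ∀ u v : ℝ, IntervalIntegrable F volume u v := fun u v =>
    hFmono.monotone.intervalIntegrable
  rcases lt_or_gt_of_ne hne with h | h
  · -- x < xs
    have hd := aux_g_diff μ hmom F hF x xs h.le
    have hsub : (∫ t in x..xs, (2 * F t - 1))
        = 2 * (∫ t in x..xs, F t) - (xs - x) := by
      rw [intervalIntegral.integral_sub ((hii x xs).const_mul 2) intervalIntegrable_const,
        intervalIntegral.integral_const_mul, intervalIntegral.integral_const]
      simp [smul_eq_mul]
    have hub := aux_ub F hFmono h
    rw [hsub] at hd
    nlinarith [hd, hub]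
  · -- xs < x
    have hd := aux_g_diff μ hmom F hF xs x h.le
    have hsub : (∫ t in xs..x, (2 * F t - 1))
        = 2 * (∫ t in xs..x, F t) - (x - xs) := by
      rw [intervalIntegral.integral_sub ((hii xs x).const_mul 2) intervalIntegrable_const,
        intervalIntegral.integral_const_mul, intervalIntegral.integral_const]
      simp [smul_eq_mul]
    have hlb := aux_lb F hFmono h
    rw [hsub] at hd
    nlinarith [hd, hlb]

lemma aux_cont (μ : Measure ℝ) [IsProbabilityMeasure μ] (hac : μ ≪ volume)
    (F : ℝ → ℝ) (hF : ∀ x, F x = (μ (Set.Iic x)).toReal) :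
    Continuous F := by
  have hFc : F = fun x => ProbabilityTheory.cdf μ x := by
    funext x
    rw [hF x, ProbabilityTheory.cdf_eq_real]; rfl
  rw [hFc]
  set f := ProbabilityTheory.cdf μ
  have hmono : Monotone f := f.mono
  rw [continuous_iff_continuousAt]
  intro x
  apply (hmono.continuousAt_iff_leftLim_eq_rightLim).2
  have hr : Function.rightLim f x = f x := f.rightLim_eq x
  have hsing : μ {x} = 0 := hac (Real.volume_singleton)
  have hms : f.measure {x} = ENNReal.ofReal (f x - Function.leftLim f x) :=
    f.measure_singleton x
  rw [ProbabilityTheory.measure_cdf, hsing] at hms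
  have hle : f x - Function.leftLim f x ≤ 0 := by
    by_contra h
    push_neg at h
    rw [eq_comm, ENNReal.ofReal_eq_zero] at hms
    linarith [hms]
  have hge : Function.leftLim f x ≤ f x := hmono.leftLim_le le_rfl
  rw [hr]
  linarith

lemma aux_exists (μ : Measure ℝ) [IsProbabilityMeasure μ] (hac : μ ≪ volume)
    (F : ℝ → ℝ) (hF : ∀ x, F x = (μ (Set.Iic x)).toReal)
    (q : ℝ) (hq0 : 0 < q) (hq1 : q < 1) : ∃ x, F x = q := by
  have hcont := aux_cont μ hac F hF
  have hFc : F = fun x => ProbabilityTheory.cdf μ x := by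
    funext x
    rw [hF x, ProbabilityTheory.cdf_eq_real]; rfl
  have hbot : Filter.Tendsto F Filter.atBot (nhds 0) := by
    rw [hFc]; exact ProbabilityTheory.tendsto_cdf_atBot μ
  have htop : Filter.Tendsto F Filter.atTop (nhds 1) := by
    rw [hFc]; exact ProbabilityTheory.tendsto_cdf_atTop μ
  obtain ⟨a, ha⟩ := (hbot.eventually_lt_const hq0).exists
  obtain ⟨b, hb⟩ := (htop.eventually_const_lt hq1).exists
  have hmono : Monotone F := by
    rw [hFc]; exact (ProbabilityTheory.cdf μ).mono
  have hab : a ≤ b := by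
    by_contra h
    push_neg at h
    have := hmono h.le
    linarith
  obtain ⟨x, _, hx⟩ := intermediate_value_Icc hab hcont.continuousOn ⟨ha.le, hb.le⟩
  exact ⟨x, hx⟩

lemma aux_sortsum : ∀ (n : ℕ) (x : Fin n → ℝ), Monotone x →
    ∑ j, ∑ j', |x j - x j'| = ∑ j : Fin n, 2 * (2 * (j.1:ℝ) + 1 - n) * x j := by
  intro n
  induction n with
  | zero => intro x _; simp
  | succ n ih =>
    intro x hx
    have hy : Monotone (x ∘ Fin.castSucc) := hx.comp (by intro i j h; exact h)
    have hlast : ∀ j : Fin (n+1), x j ≤ x (Fin.last n) := fun j => hx (Fin.le_last j)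
    rw [Fin.sum_univ_castSucc (f := fun j => ∑ j', |x j - x j'|)]
    have hinner : ∀ j : Fin n, ∑ j', |x j.castSucc - x j'|
        = (∑ j' : Fin n, |x j.castSucc - x j'.castSucc|) + (x (Fin.last n) - x j.castSucc) := by
      intro j
      rw [Fin.sum_univ_castSucc (f := fun j' => |x j.castSucc - x j'|)]
      rw [abs_of_nonpos (by linarith [hlast j.castSucc])]
      ring
    have hlastrow : ∑ j', |x (Fin.last n) - x j'|
        = (∑ j' : Fin n, (x (Fin.last n) - x j'.castSucc)) := by
      rw [Fin.sum_univ_castSucc (f := fun j' => |x (Fin.last n) - x j'|)]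
      simp only [sub_self, abs_zero, add_zero]
      congr 1
      funext j'
      rw [abs_of_nonneg (by linarith [hlast j'.castSucc])]
    rw [hlastrow]
    simp only [hinner]
    have hih := ih (x ∘ Fin.castSucc) hy
    simp only [Function.comp_apply] at hih
    rw [Finset.sum_add_distrib, hih]
    push_cast
    rw [Fin.sum_univ_castSucc (f := fun j : Fin (n+1) => 2 * (2 * (j.1:ℝ) + 1 - (n+1)) * x j)]
    have hptw : ∀ j : Fin n, 2 * (2 * ((j.castSucc).1:ℝ) + 1 - (n+1)) * x j.castSucc
        = 2 * (2 * (j.1:ℝ) + 1 - n) * x j.castSucc - 2 * x j.castSucc := by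
      intro j
      simp only [Fin.coe_castSucc]
      ring
    simp only [hptw, Finset.sum_sub_distrib, Finset.sum_const, Finset.card_univ,
      Fintype.card_fin, nsmul_eq_mul, Fin.val_last]
    rw [← Finset.mul_sum]
    push_cast
    ring

end EnergyAux

/-- Optimality of quantiles for the 1D energy-kernel quantization: for an
absolutely continuous probability measure μ on ℝ with strictly increasing CDF
and finite first moment, the minimizers of the energy distance squared
D X = (1/J) Σ_j ∫|X_j−y| dμ − (1/(2J²)) Σ_{j,j'} |X_j−X_{j'}| − (1/2)∬|y−y'|
exist and, up to reordering, satisfy F(X_{(j)}) = (j − 1/2)/J. -/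
theorem energy_quantization_quantiles_1D
    (μ : Measure ℝ) [IsProbabilityMeasure μ]
    (hac : μ ≪ volume)
    (F : ℝ → ℝ) (hF : ∀ x, F x = (μ (Set.Iic x)).toReal)
    (hFmono : StrictMono F)
    (hmom : Integrable (fun x => |x|) μ)
    (J : ℕ) (hJ : 1 ≤ J)
    (D : (Fin J → ℝ) → ℝ)
    (hD : ∀ X, D X =
      (1 / J) * ∑ j, ∫ y, |X j - y| ∂μ
      - (1 / (2 * (J : ℝ) ^ 2)) * ∑ j, ∑ j', |X j - X j'|
      - (1 / 2) * ∫ y, ∫ y', |y - y'| ∂μ ∂μ) :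
    (∃ X : Fin J → ℝ, IsMinOn D Set.univ X) ∧
      ∀ X : Fin J → ℝ, IsMinOn D Set.univ X →
        ∃ σ : Equiv.Perm (Fin J), Monotone (fun j => X (σ j)) ∧
          ∀ j : Fin J, F (X (σ j)) = ((j : ℝ) + 1 / 2) / J := by
  have hJ0 : (0:ℝ) < J := by exact_mod_cast hJ
  have hJne : (J:ℝ) ≠ 0 := ne_of_gt hJ0
  set q : Fin J → ℝ := fun j => ((j : ℝ) + 1 / 2) / J with hqdef
  have hq0 : ∀ j, 0 < q j := by
    intro j
    apply div_pos _ hJ0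
    positivity
  have hq1 : ∀ j, q j < 1 := by
    intro j
    rw [hqdef, div_lt_one hJ0]
    have : (j:ℕ) < J := j.isLt
    have : ((j:ℕ):ℝ) + 1 ≤ J := by exact_mod_cast this
    linarith
  have hex : ∀ j : Fin J, ∃ x, F x = q j := fun j =>
    aux_exists μ hac F hF (q j) (hq0 j) (hq1 j)
  choose xs hxs using hex
  have hq_strict : StrictMono q := by
    intro i j hij
    have h : ((i:ℕ):ℝ) < ((j:ℕ):ℝ) := by exact_mod_cast hij
    rw [hqdef]
    apply (div_lt_div_iff_of_pos_right hJ0).mpr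
    linarith
  have hxs_mono : StrictMono xs := by
    intro i j hij
    have : F (xs i) < F (xs j) := by rw [hxs i, hxs j]; exact hq_strict hij
    exact hFmono.lt_iff_lt.mp this
  -- the separated form of D on monotone configurations
  set g : ℝ → ℝ := fun x => ∫ y, |x - y| ∂μ with hgdef
  set C : ℝ := (1 / 2) * ∫ y, ∫ y', |y - y'| ∂μ ∂μ with hCdef
  set ψ : Fin J → ℝ → ℝ := fun j x => (1 / J) * (g x - (2 * q j - 1) * x) with hψdef
  have formD : ∀ X : Fin J → ℝ, Monotone X → D X = (∑ j, ψ j (X j)) - C := by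
    intro X hX
    rw [hD X, aux_sortsum J X hX]
    have hterm : ∀ j : Fin J, ψ j (X j)
        = (1 / J) * g (X j) - (1 / (2 * (J:ℝ) ^ 2)) * (2 * (2 * (j.1:ℝ) + 1 - J) * X j) := by
      intro j
      rw [hψdef, hqdef]
      field_simp
    simp only [hterm]
    rw [Finset.sum_sub_distrib, ← Finset.mul_sum, ← Finset.mul_sum]
  -- permutation invariance of D
  have hperm : ∀ (X : Fin J → ℝ) (σ : Equiv.Perm (Fin J)), D (X ∘ σ) = D X := by
    intro X σ
    rw [hD, hD]
    have h1 : ∑ j, ∫ y, |(X ∘ σ) j - y| ∂μ = ∑ j, ∫ y, |X j - y| ∂μ :=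
      Equiv.sum_comp σ (fun j => ∫ y, |X j - y| ∂μ)
    have h2 : ∑ j, ∑ j', |(X ∘ σ) j - (X ∘ σ) j'| = ∑ j, ∑ j', |X j - X j'| := by
      have hrow : ∀ j : Fin J, ∑ j', |X (σ j) - (X ∘ σ) j'| = ∑ j', |X (σ j) - X j'| :=
        fun j => Equiv.sum_comp σ (fun j' => |X (σ j) - X j'|)
      calc ∑ j, ∑ j', |(X ∘ σ) j - (X ∘ σ) j'|
          = ∑ j, ∑ j', |X (σ j) - X j'| := Finset.sum_congr rfl (fun j _ => hrow j)
        _ = ∑ j, ∑ j', |X j - X j'| :=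
            Equiv.sum_comp σ (fun j => ∑ j', |X j - X j'|)
    rw [h1, h2]
  -- strict minimality of each ψ j at xs j
  have hψ_lt : ∀ (j : Fin J) (t : ℝ), t ≠ xs j → ψ j (xs j) < ψ j t := by
    intro j t ht
    have := aux_strictmin μ hmom F hF hFmono (xs j) t ht
    rw [hxs j] at this
    rw [hψdef]
    simp only
    apply mul_lt_mul_of_pos_left _ (by positivity : (0:ℝ) < 1 / J)
    exact this
  have hψ_le : ∀ (j : Fin J) (t : ℝ), ψ j (xs j) ≤ ψ j t := by
    intro j t
    by_cases h : t = xs j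
    · rw [h]
    · exact (hψ_lt j t h).le
  -- D of any configuration is at least D xs
  have hDxs : D xs = (∑ j, ψ j (xs j)) - C := formD xs hxs_mono.monotone
  have hmain : ∀ X : Fin J → ℝ, D xs ≤ D X := by
    intro X
    have hσ := Tuple.monotone_sort X
    have hDX : D X = (∑ j, ψ j (X (Tuple.sort X j))) - C := by
      rw [← hperm X (Tuple.sort X)]
      exact formD (X ∘ Tuple.sort X) hσ
    rw [hDxs, hDX]
    have : ∑ j, ψ j (xs j) ≤ ∑ j, ψ j (X (Tuple.sort X j)) :=
      Finset.sum_le_sum (fun j _ => hψ_le j _)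
    linarith
  constructor
  · exact ⟨xs, isMinOn_iff.mpr (fun X _ => hmain X)⟩
  · intro X hmin
    refine ⟨Tuple.sort X, Tuple.monotone_sort X, ?_⟩
    have hσ := Tuple.monotone_sort X
    have hDX : D X = (∑ j, ψ j (X (Tuple.sort X j))) - C := by
      rw [← hperm X (Tuple.sort X)]
      exact formD (X ∘ Tuple.sort X) hσ
    have hXle : D X ≤ D xs := isMinOn_iff.mp hmin xs (Set.mem_univ _)
    have heq : ∀ j : Fin J, X (Tuple.sort X j) = xs j := by
      by_contra h
      push_neg at h
      obtain ⟨j0, hj0⟩ := h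
      have hlt : ∑ j, ψ j (xs j) < ∑ j, ψ j (X (Tuple.sort X j)) :=
        Finset.sum_lt_sum (fun j _ => hψ_le j _) ⟨j0, Finset.mem_univ _, hψ_lt j0 _ hj0⟩
      have : D xs < D X := by rw [hDxs, hDX]; linarith
      linarith
    intro j
    rw [heq j, hxs j]
end

section
/- For the uniform law μ on [0,1] and the energy kernel h(x,y)=|x−y|, the points x_j = (j−1/2)/J, j = 1,…,J, with uniform weights 1/J, minimize the energy distance d((1/J)Σ_j δ_{x_j}, μ)² over all choices of J points in ℝ. -/
open MeasureTheory

lemma key_int (m x : ℝ) (hm0 : 0 ≤ m) (hm1 : m ≤ 1) :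
    (∫ y, |m - y| ∂(volume.restrict (Set.Icc (0:ℝ) 1))) + (2*m - 1) * (x - m)
      ≤ ∫ y, |x - y| ∂(volume.restrict (Set.Icc (0:ℝ) 1)) := by
  set μ := volume.restrict (Set.Icc (0:ℝ) 1) with hμ
  set s : ℝ → ℝ := fun y => if y ≤ m then 1 else -1 with hs
  have hsmeas : Measurable s := by
    apply Measurable.ite measurableSet_Iic measurable_const measurable_const
  have hsint : Integrable s μ := by
    refine Integrable.mono' (integrable_const 1) hsmeas.aestronglyMeasurable ?_
    filter_upwards with y
    by_cases h : y ≤ m <;> simp [hs, h]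
  have habs : ∀ c : ℝ, Integrable (fun y => |c - y|) μ := fun c =>
    (continuous_const.sub continuous_id).abs.integrableOn_Icc
  have hpt : ∀ y, |m - y| + s y * (x - m) ≤ |x - y| := by
    intro y
    by_cases h : y ≤ m
    · simp only [hs, if_pos h]
      rw [abs_of_nonneg (by linarith)]
      have := le_abs_self (x - y); linarith
    · simp only [hs, if_neg h]
      rw [abs_of_nonpos (by linarith)]
      have := neg_abs_le (x - y); linarith
  have hint : ∫ y, (|m - y| + s y * (x - m)) ∂μ ≤ ∫ y, |x - y| ∂μ :=
    integral_mono ((habs m).add (hsint.mul_const _)) (habs x) hpt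
  have hsii : ∀ a b : ℝ, IntervalIntegrable s volume a b := by
    intro a b
    rw [intervalIntegrable_iff, Set.uIoc]
    refine Integrable.mono' (integrable_const 1) hsmeas.aestronglyMeasurable.restrict ?_
    filter_upwards with y
    by_cases h : y ≤ m <;> simp [hs, h]
  have h1 : ∫ y in (0:ℝ)..m, s y = m := by
    rw [intervalIntegral.integral_of_le hm0, setIntegral_congr_fun (g := fun _ => (1:ℝ))
      measurableSet_Ioc (fun y hy => by simp [hs, hy.2]), setIntegral_const]
    simp [Real.volume_Ioc, ENNReal.toReal_ofReal hm0]
    exact hm0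
  have h2 : ∫ y in m..(1:ℝ), s y = -(1 - m) := by
    rw [intervalIntegral.integral_of_le hm1, setIntegral_congr_fun (g := fun _ => (-1:ℝ))
      measurableSet_Ioc (fun y hy => by simp [hs, not_le.mpr hy.1]), setIntegral_const]
    simp [Real.volume_Ioc, ENNReal.toReal_ofReal (by linarith : (0:ℝ) ≤ 1 - m)]
    rw [max_eq_left (by linarith)]; ring
  have hsval : ∫ y, s y ∂μ = 2*m - 1 := by
    rw [hμ, integral_Icc_eq_integral_Ioc,
      ← intervalIntegral.integral_of_le (by norm_num : (0:ℝ) ≤ 1),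
      ← intervalIntegral.integral_add_adjacent_intervals (a := 0) (b := m) (c := 1)
        (hsii 0 m) (hsii m 1), h1, h2]
    ring
  rw [integral_add (habs m) (hsint.mul_const _), integral_mul_const, hsval] at hint
  linarith [hint]

lemma sorted_double_sum (n : ℕ) (y : ℕ → ℝ) (hmono : ∀ i j, i ≤ j → y i ≤ y j) :
    ∑ j ∈ Finset.range n, ∑ j' ∈ Finset.range n, |y j - y j'|
      = ∑ j ∈ Finset.range n, (2*(2*(j:ℝ)+1) - 2*n) * y j := by
  induction n with
  | zero => simp
  | succ n ih =>
    have e1 : ∀ j ∈ Finset.range n, ∑ j' ∈ Finset.range (n+1), |y j - y j'|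
        = (∑ j' ∈ Finset.range n, |y j - y j'|) + (y n - y j) := by
      intro j hj
      rw [Finset.sum_range_succ,
        abs_of_nonpos (by linarith [hmono j n (Finset.mem_range.mp hj).le] : y j - y n ≤ 0)]
      ring
    have e2 : ∑ j' ∈ Finset.range (n+1), |y n - y j'|
        = ∑ j' ∈ Finset.range n, (y n - y j') := by
      rw [Finset.sum_range_succ]
      simp only [sub_self, abs_zero, add_zero]
      exact Finset.sum_congr rfl fun j' hj' =>
        abs_of_nonneg (by linarith [hmono j' n (Finset.mem_range.mp hj').le])
    rw [Finset.sum_range_succ (f := fun j => ∑ j' ∈ Finset.range (n+1), |y j - y j'|),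
      Finset.sum_congr rfl e1, e2, Finset.sum_add_distrib, ih,
      Finset.sum_range_succ (f := fun j => (2*(2*(j:ℝ)+1) - 2*(n+1:ℕ)) * y j)]
    have e3 : ∑ j ∈ Finset.range n, (2*(2*(j:ℝ)+1) - 2*(n+1:ℕ)) * y j
        = ∑ j ∈ Finset.range n, ((2*(2*(j:ℝ)+1) - 2*n) * y j - 2 * y j) :=
      Finset.sum_congr rfl fun j _ => by push_cast; ring
    rw [e3, Finset.sum_sub_distrib, Finset.sum_sub_distrib, Finset.sum_const,
      Finset.card_range, ← Finset.mul_sum]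
    push_cast
    ring


lemma termwise (J : ℕ) (hJ : 1 ≤ J) (j : ℕ) (hj : j < J) (t : ℝ) :
    (1/(J:ℝ)) * (∫ y, |(((j:ℝ)+1/2)/J) - y| ∂(volume.restrict (Set.Icc (0:ℝ) 1)))
      - (1/(2*(J:ℝ)^2)) * ((2*(2*(j:ℝ)+1) - 2*J) * (((j:ℝ)+1/2)/J))
    ≤ (1/(J:ℝ)) * (∫ y, |t - y| ∂(volume.restrict (Set.Icc (0:ℝ) 1)))
      - (1/(2*(J:ℝ)^2)) * ((2*(2*(j:ℝ)+1) - 2*J) * t) := by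
  have hJ0 : (0:ℝ) < J := Nat.cast_pos.mpr hJ
  have hjJ : (j:ℝ) + 1 ≤ J := by exact_mod_cast Nat.succ_le_of_lt hj
  set m : ℝ := ((j:ℝ)+1/2)/J with hm
  have hm0 : 0 ≤ m := by positivity
  have hm1 : m ≤ 1 := by rw [hm, div_le_one hJ0]; linarith
  have K := key_int m t hm0 hm1
  have H : (1/(2*(J:ℝ)^2)) * ((2*(2*(j:ℝ)+1) - 2*J) * t)
      - (1/(2*(J:ℝ)^2)) * ((2*(2*(j:ℝ)+1) - 2*J) * m) = (1/(J:ℝ)) * ((2*m-1)*(t-m)) := by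
    rw [hm]; field_simp
  have h1 : (1/(J:ℝ)) * ((∫ y, |m - y| ∂(volume.restrict (Set.Icc (0:ℝ) 1))) + (2*m-1)*(t-m))
      ≤ (1/(J:ℝ)) * (∫ y, |t - y| ∂(volume.restrict (Set.Icc (0:ℝ) 1))) :=
    mul_le_mul_of_nonneg_left K (by positivity)
  rw [mul_add] at h1
  linarith

/-- For the uniform law μ on [0,1] and the energy kernel |x−y|, the points
x_j = (j − 1/2)/J with uniform weights minimize the energy distance squared
over all choices of J points in ℝ. -/
theorem energy_quantization_uniform_law
    (J : ℕ) (hJ : 1 ≤ J)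
    (μ : Measure ℝ) (hμ : μ = volume.restrict (Set.Icc (0 : ℝ) 1))
    (D : (Fin J → ℝ) → ℝ)
    (hD : ∀ X, D X =
      (1 / J) * ∑ j, ∫ y, |X j - y| ∂μ
      - (1 / (2 * (J : ℝ) ^ 2)) * ∑ j, ∑ j', |X j - X j'|
      - (1 / 2) * ∫ y, ∫ y', |y - y'| ∂μ ∂μ) :
    IsMinOn D Set.univ (fun j : Fin J => ((j : ℝ) + 1 / 2) / J) := by
  rw [isMinOn_iff]
  intro x _
  rw [hD, hD, hμ]
  set ν := volume.restrict (Set.Icc (0:ℝ) 1) with hν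
  apply sub_le_sub_right
  -- the sorted version of x
  set σ := Tuple.sort x with hσ
  have hxs : Monotone (x ∘ σ) := Tuple.monotone_sort x
  set y : ℕ → ℝ := fun j => x (σ ⟨min j (J-1), by omega⟩) with hy
  have hymono : ∀ i j, i ≤ j → y i ≤ y j := by
    intro i j hij
    exact hxs (by simp only [Fin.mk_le_mk]; omega)
  have hyval : ∀ j : Fin J, x (σ j) = y j.val := by
    intro j
    have hjlt := j.isLt
    have h : (⟨min j.val (J-1), by omega⟩ : Fin J) = j := by
      apply Fin.ext; show min j.val (J-1) = j.val; omega
    simp only [hy, h]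
  -- the midpoint sequence
  set m : ℕ → ℝ := fun j => ((j:ℝ) + 1/2)/J with hmdef
  have hmmono : ∀ i j, i ≤ j → m i ≤ m j := by
    intro i j hij
    have : (i:ℝ) ≤ j := Nat.cast_le.mpr hij
    simp only [hmdef]
    gcongr
  -- sum conversions for x
  have S1 : ∑ j : Fin J, (∫ yy, |x j - yy| ∂ν) = ∑ j ∈ Finset.range J, ∫ yy, |y j - yy| ∂ν := by
    rw [← Equiv.sum_comp σ (fun j => ∫ yy, |x j - yy| ∂ν),
      ← Fin.sum_univ_eq_sum_range (fun j => ∫ yy, |y j - yy| ∂ν) J]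
    exact Finset.sum_congr rfl fun j _ => by rw [hyval j]
  have S2 : ∑ j : Fin J, ∑ j' : Fin J, |x j - x j'|
      = ∑ j ∈ Finset.range J, (2*(2*(j:ℝ)+1) - 2*J) * y j := by
    calc ∑ j : Fin J, ∑ j' : Fin J, |x j - x j'|
        = ∑ j : Fin J, ∑ j' : Fin J, |x (σ j) - x j'| :=
          (Equiv.sum_comp σ (fun j => ∑ j' : Fin J, |x j - x j'|)).symm
      _ = ∑ j : Fin J, ∑ j' : Fin J, |x (σ j) - x (σ j')| :=
          Finset.sum_congr rfl fun j _ => (Equiv.sum_comp σ (fun j' => |x (σ j) - x j'|)).symm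
      _ = ∑ j ∈ Finset.range J, ∑ j' ∈ Finset.range J, |y j - y j'| := by
          rw [← Fin.sum_univ_eq_sum_range (fun j => ∑ j' ∈ Finset.range J, |y j - y j'|) J]
          refine Finset.sum_congr rfl fun j _ => ?_
          rw [hyval j, ← Fin.sum_univ_eq_sum_range (fun j' => |y j.val - y j'|) J]
          exact Finset.sum_congr rfl fun j' _ => by rw [hyval j']
      _ = ∑ j ∈ Finset.range J, (2*(2*(j:ℝ)+1) - 2*J) * y j := sorted_double_sum J y hymono
  -- sum conversions for the midpoints
  have M1 : ∑ j : Fin J, (∫ yy, |((j:ℝ)+1/2)/J - yy| ∂ν)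
      = ∑ j ∈ Finset.range J, ∫ yy, |m j - yy| ∂ν :=
    Fin.sum_univ_eq_sum_range (fun j => ∫ yy, |m j - yy| ∂ν) J
  have M2 : ∑ j : Fin J, ∑ j' : Fin J, |((j:ℝ)+1/2)/J - (((j':ℝ)+1/2)/J)|
      = ∑ j ∈ Finset.range J, (2*(2*(j:ℝ)+1) - 2*J) * m j := by
    rw [← sorted_double_sum J m hmmono,
      ← Fin.sum_univ_eq_sum_range (fun j => ∑ j' ∈ Finset.range J, |m j - m j'|) J]
    exact Finset.sum_congr rfl fun j _ =>
      Fin.sum_univ_eq_sum_range (fun j' => |m j.val - m j'|) J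
  rw [S1, S2, M1, M2, Finset.mul_sum, Finset.mul_sum, Finset.mul_sum, Finset.mul_sum,
    ← Finset.sum_sub_distrib, ← Finset.sum_sub_distrib]
  refine Finset.sum_le_sum fun j hj => ?_
  exact termwise J hJ j (Finset.mem_range.mp hj) (y j)
end

section
/- Let ν = Σ_{q=1}^Q p_q δ_{x_q} be a fixed discrete measure with weights p in the probability simplex, μ a probability measure with finite kernel moments, and Z₁,…,Z_J i.i.d. samples from μ with J ≥ 2. Then the estimator T = d(ν, (1/J)Σ_j δ_{Z_j})² − [Σ_{j≠j'} h(Z_j, Z_{j'})]/(2J²(J−1)) is an unbiased estimator of d(ν, μ)²: E[T] = d(ν,μ)². -/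
open MeasureTheory ProbabilityTheory

/-- Unbiasedness of the one-sample estimator: for a fixed discrete measure
ν = Σ_q p_q δ_{x_q} (p in the simplex) and i.i.d. samples Z₁,…,Z_J ∼ μ,
the estimator
T = d(ν, (1/J)Σ_j δ_{Z_j})² − (Σ_{j≠j'} h(Z_j,Z_{j'}))/(2J²(J−1))
is an unbiased estimator of d(ν,μ)², where
d(ν, (1/J)Σ_j δ_{Z_j})² = Σ_q Σ_j p_q (1/J) h(x_q,Z_j)
  − (1/2)Σ_{q,q'} p_q p_{q'} h(x_q,x_{q'}) − (1/(2J²))Σ_{j,j'} h(Z_j,Z_{j'}) and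
d(ν,μ)² = Σ_q p_q ∫ h(x_q,y) dμ − (1/2)Σ_{q,q'} p_q p_{q'} h(x_q,x_{q'})
  − (1/2)∬ h dμ dμ. -/
theorem one_sample_estimator_unbiased
    {E : Type*} [MeasurableSpace E]
    {Ω : Type*} [MeasurableSpace Ω] (P : Measure Ω) [IsProbabilityMeasure P]
    (μ : Measure E) [IsProbabilityMeasure μ]
    (h : E → E → ℝ) (hmeas : Measurable (Function.uncurry h))
    (hsymm : ∀ x y, h x y = h y x) (hdiag : ∀ x, h x x = 0)
    (Q J : ℕ) (hQ : 1 ≤ Q) (hJ : 2 ≤ J)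
    (p : Fin Q → ℝ) (hp0 : ∀ q, 0 ≤ p q) (hp1 : ∑ q, p q = 1)
    (x : Fin Q → E)
    (Z : Fin J → Ω → E) (hZmeas : ∀ j, Measurable (Z j))
    (hiid : iIndepFun Z P)
    (hlaw : ∀ j, Measure.map (Z j) P = μ)
    (hint1 : ∀ q, Integrable (fun y => h (x q) y) μ)
    (hint2 : Integrable (Function.uncurry h) (μ.prod μ)) :
    (∫ ω, ((∑ q, ∑ j, p q * (1 / J) * h (x q) (Z j ω))
        - (1 / 2) * ∑ q, ∑ q', p q * p q' * h (x q) (x q')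
        - (1 / (2 * (J : ℝ) ^ 2)) * ∑ j, ∑ j', h (Z j ω) (Z j' ω)
        - (∑ j, ∑ j', if j = j' then 0 else h (Z j ω) (Z j' ω))
            / (2 * (J : ℝ) ^ 2 * (J - 1))) ∂P)
      = (∑ q, p q * ∫ y, h (x q) y ∂μ)
        - (1 / 2) * ∑ q, ∑ q', p q * p q' * h (x q) (x q')
        - (1 / 2) * ∫ y, ∫ y', h y y' ∂μ ∂μ := by

  classical
  have hJ2 : (2:ℝ) ≤ (J:ℝ) := by exact_mod_cast hJ
  have hJ0 : (J:ℝ) ≠ 0 := by linarith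
  have hJ1 : (J:ℝ) - 1 ≠ 0 := by linarith
  set A : ℝ := ∫ y, ∫ y', h y y' ∂μ ∂μ with hA
  set C : ℝ := (1 / 2) * ∑ q, ∑ q', p q * p q' * h (x q) (x q') with hC
  set c : ℝ := 1 / (2 * (J : ℝ) ^ 2) + 1 / (2 * (J : ℝ) ^ 2 * ((J:ℝ) - 1)) with hc
  have hx : ∀ q, Measurable (h (x q)) := fun q => hmeas.comp measurable_prodMk_left
  -- single-sample facts
  have int1 : ∀ q j, Integrable (fun ω => h (x q) (Z j ω)) P := by
    intro q j
    have h1 := hint1 q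
    rw [← hlaw j] at h1
    exact (integrable_map_measure (hx q).aestronglyMeasurable (hZmeas j).aemeasurable).mp h1
  have key1 : ∀ q j, ∫ ω, h (x q) (Z j ω) ∂P = ∫ y, h (x q) y ∂μ := by
    intro q j
    rw [← hlaw j, integral_map (hZmeas j).aemeasurable (hx q).aestronglyMeasurable]
  -- pair facts
  have hpair : ∀ j j', j ≠ j' → Measure.map (fun ω => (Z j ω, Z j' ω)) P = μ.prod μ := by
    intro j j' hne
    have hindep : IndepFun (Z j) (Z j') P := hiid.indepFun hne
    have := (indepFun_iff_map_prod_eq_prod_map_map (hZmeas j).aemeasurable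
      (hZmeas j').aemeasurable).mp hindep
    rwa [hlaw, hlaw] at this
  have int2' : ∀ j j', j ≠ j' → Integrable (fun ω => h (Z j ω) (Z j' ω)) P := by
    intro j j' hne
    have h2 := hint2
    rw [← hpair j j' hne] at h2
    exact (integrable_map_measure hmeas.aestronglyMeasurable
      ((hZmeas j).prodMk (hZmeas j')).aemeasurable).mp h2
  have int2 : ∀ j j', Integrable (fun ω => h (Z j ω) (Z j' ω)) P := by
    intro j j'
    by_cases hne : j = j'
    · subst hne
      have : (fun ω => h (Z j ω) (Z j ω)) = fun _ => (0:ℝ) := funext fun ω => hdiag _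
      rw [this]; exact integrable_const 0
    · exact int2' j j' hne
  have key2 : ∀ j j', ∫ ω, h (Z j ω) (Z j' ω) ∂P = if j = j' then 0 else A := by
    intro j j'
    by_cases hne : j = j'
    · subst hne
      have : (fun ω => h (Z j ω) (Z j ω)) = fun _ => (0:ℝ) := funext fun ω => hdiag _
      simp [this]
    · simp only [hne, if_false]
      have hAeq : A = ∫ z, Function.uncurry h z ∂(μ.prod μ) := (integral_prod _ hint2).symm
      rw [hAeq, ← hpair j j' hne,
        integral_map ((hZmeas j).prodMk (hZmeas j')).aemeasurable hmeas.aestronglyMeasurable]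
      rfl
  -- rewrite integrand
  have hrw : ∀ ω, ((∑ q, ∑ j, p q * (1 / J) * h (x q) (Z j ω))
        - C
        - (1 / (2 * (J : ℝ) ^ 2)) * ∑ j, ∑ j', h (Z j ω) (Z j' ω)
        - (∑ j, ∑ j', if j = j' then 0 else h (Z j ω) (Z j' ω))
            / (2 * (J : ℝ) ^ 2 * ((J:ℝ) - 1)))
      = (∑ q, ∑ j, p q * (1 / J) * h (x q) (Z j ω)) - C
        - c * ∑ j, ∑ j', h (Z j ω) (Z j' ω) := by
    intro ω
    have hsum : (∑ j, ∑ j', if j = j' then (0:ℝ) else h (Z j ω) (Z j' ω))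
        = ∑ j, ∑ j', h (Z j ω) (Z j' ω) := by
      refine Finset.sum_congr rfl fun j _ => Finset.sum_congr rfl fun j' _ => ?_
      by_cases hne : j = j'
      · subst hne; simp [hdiag]
      · simp [hne]
    rw [hsum, hc]
    field_simp
    ring
  have intS1 : Integrable (fun ω => ∑ q, ∑ j, p q * (1 / (J:ℝ)) * h (x q) (Z j ω)) P := by
    apply integrable_finset_sum
    intro q _
    apply integrable_finset_sum
    intro j _
    exact (int1 q j).const_mul _
  have intS2 : Integrable (fun ω => ∑ j, ∑ j', h (Z j ω) (Z j' ω)) P := by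
    apply integrable_finset_sum
    intro j _
    apply integrable_finset_sum
    intro j' _
    exact int2 j j'
  have e1 : ∫ ω, (∑ q, ∑ j, p q * (1 / (J:ℝ)) * h (x q) (Z j ω)) ∂P
      = ∑ q, p q * ∫ y, h (x q) y ∂μ := by
    rw [integral_finset_sum _ fun q _ => integrable_finset_sum _ fun j _ => (int1 q j).const_mul _]
    refine Finset.sum_congr rfl fun q _ => ?_
    rw [integral_finset_sum _ fun j _ => (int1 q j).const_mul _]
    have : ∀ j : Fin J, ∫ ω, p q * (1 / (J:ℝ)) * h (x q) (Z j ω) ∂P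
        = p q * (1 / (J:ℝ)) * ∫ y, h (x q) y ∂μ := by
      intro j; rw [integral_const_mul, key1]
    rw [Finset.sum_congr rfl fun j _ => this j, Finset.sum_const, Finset.card_univ,
      Fintype.card_fin, nsmul_eq_mul]
    field_simp
  have e2 : ∫ ω, (∑ j, ∑ j', h (Z j ω) (Z j' ω)) ∂P = (J:ℝ) * (((J:ℝ) - 1) * A) := by
    rw [integral_finset_sum _ fun j _ => integrable_finset_sum _ fun j' _ => int2 j j']
    have hinner : ∀ j : Fin J, ∑ j', (if j = j' then (0:ℝ) else A) = ((J:ℝ) - 1) * A := by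
      intro j
      have h1 : (∑ j' : Fin J, (if j = j' then (0:ℝ) else A))
          = ∑ j' : Fin J, (A - if j = j' then A else 0) := by
        refine Finset.sum_congr rfl fun j' _ => ?_
        by_cases hne : j = j' <;> simp [hne]
      rw [h1, Finset.sum_sub_distrib]
      simp [Finset.sum_ite_eq, Finset.sum_const, Finset.card_univ, nsmul_eq_mul]
      ring
    calc ∑ j, ∫ ω, (∑ j', h (Z j ω) (Z j' ω)) ∂P
        = ∑ j : Fin J, ((J:ℝ) - 1) * A := by
          refine Finset.sum_congr rfl fun j _ => ?_
          rw [integral_finset_sum _ fun j' _ => int2 j j',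
            Finset.sum_congr rfl fun j' _ => key2 j j', hinner]
      _ = (J:ℝ) * (((J:ℝ) - 1) * A) := by
          rw [Finset.sum_const, Finset.card_univ, Fintype.card_fin, nsmul_eq_mul]
  have hC' : (1 / 2) * ∑ q, ∑ q', p q * p q' * h (x q) (x q') = C := hC.symm
  calc (∫ ω, ((∑ q, ∑ j, p q * (1 / J) * h (x q) (Z j ω))
        - (1 / 2) * ∑ q, ∑ q', p q * p q' * h (x q) (x q')
        - (1 / (2 * (J : ℝ) ^ 2)) * ∑ j, ∑ j', h (Z j ω) (Z j' ω)
        - (∑ j, ∑ j', if j = j' then 0 else h (Z j ω) (Z j' ω))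
            / (2 * (J : ℝ) ^ 2 * ((J:ℝ) - 1))) ∂P)
      = ∫ ω, ((∑ q, ∑ j, p q * (1 / J) * h (x q) (Z j ω)) - C
        - c * ∑ j, ∑ j', h (Z j ω) (Z j' ω)) ∂P := by
        rw [hC']
        exact integral_congr_ae (Filter.Eventually.of_forall hrw)
    _ = (∑ q, p q * ∫ y, h (x q) y ∂μ) - C - c * ((J:ℝ) * (((J:ℝ) - 1) * A)) := by
        have i1 : Integrable (fun ω =>
            (∑ q, ∑ j, p q * (1 / (J:ℝ)) * h (x q) (Z j ω)) - C) P :=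
          intS1.sub (integrable_const C)
        have i2 : Integrable (fun ω => c * ∑ j, ∑ j', h (Z j ω) (Z j' ω)) P :=
          intS2.const_mul c
        rw [integral_sub i1 i2, integral_sub intS1 (integrable_const C), integral_const,
          integral_const_mul, e1, e2]
        simp
    _ = (∑ q, p q * ∫ y, h (x q) y ∂μ) - C - (1/2) * A := by
        have : c * ((J:ℝ) * (((J:ℝ) - 1) * A)) = (1/2) * A := by
          rw [hc]; field_simp; ring
        rw [this]
end
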